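/- arXiv:2604.01856 — 2 statements merged into one kernel-verified Lean document; each statement's English description precedes it below -/
import Mathlib

section
/- Let J=(a,b) be a bounded interval, κ ∈ L¹(J), and (κ_ε)_{ε>0} bounded continuous functions with ‖κ_ε - κ‖_{L¹(J)} → 0. Let X_ε, X : J → ℝ² be the arc-length parametrized curves with curvatures κ_ε and κ and coinciding initial data (position, first and second derivative) at s = a. Then for every s ∈ J, ‖X_ε(s) - X(s)‖₂ ≤ M·M_ε·(b-a)·‖κ_ε - κ‖_{L¹(J)} → 0 as ε → 0; i.e. the regularized curves converge pointwise to the degenerate curve. -/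
open MeasureTheory Set Filter Topology

lemma split_Ioc_integral' {F : Type*} [NormedAddCommGroup F] [NormedSpace ℝ F]
    {f : ℝ → F} {a b x y : ℝ} (hax : a ≤ x) (hxy : x ≤ y) (hyb : y ≤ b)
    (hf : IntegrableOn f (Ioc a b)) :
    ∫ τ in Ioc a y, f τ = (∫ τ in Ioc a x, f τ) + ∫ τ in Ioc x y, f τ := by
  rw [← setIntegral_union (Set.Ioc_disjoint_Ioc.2 (by simp [le_max_iff]))
    measurableSet_Ioc (hf.mono_set (Ioc_subset_Ioc le_rfl (hxy.trans hyb)))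
    (hf.mono_set (Ioc_subset_Ioc hax hyb)), Ioc_union_Ioc_eq_Ioc hax hxy]

/-- Boundedness on the closed interval gives `Memℒp ⊤` on `Ioc`. -/
lemma contOn_memTop {F : Type*} [NormedAddCommGroup F]
    {f : ℝ → F} {a x : ℝ} (hf : ContinuousOn f (Icc a x)) :
    MemLp f ⊤ (volume.restrict (Ioc a x)) := by
  obtain ⟨C, hC⟩ := isCompact_Icc.exists_bound_of_continuousOn hf
  refine memLp_top_of_bound
    ((hf.mono Ioc_subset_Icc_self).aestronglyMeasurable measurableSet_Ioc) C ?_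
  exact (ae_restrict_iff' measurableSet_Ioc).2
    (Filter.Eventually.of_forall fun τ hτ => hC τ (Ioc_subset_Icc_self hτ))

lemma intOn_mul_of_contOn {k f : ℝ → ℝ} {a x : ℝ}
    (hk : IntegrableOn k (Ioc a x)) (hf : ContinuousOn f (Icc a x)) :
    IntegrableOn (fun τ => k τ * f τ) (Ioc a x) := by
  obtain ⟨C, hC⟩ := isCompact_Icc.exists_bound_of_continuousOn hf
  have hgm : AEStronglyMeasurable f (volume.restrict (Ioc a x)) :=
    (hf.mono Ioc_subset_Icc_self).aestronglyMeasurable measurableSet_Ioc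
  have hbd : ∀ᵐ τ ∂(volume.restrict (Ioc a x)), ‖f τ‖ ≤ C :=
    (ae_restrict_iff' measurableSet_Ioc).2
      (Filter.Eventually.of_forall fun τ hτ => hC τ (Ioc_subset_Icc_self hτ))
  have := Integrable.bdd_mul (c := C) hk hgm hbd
  simpa [mul_comm, IntegrableOn] using this

lemma smul_intOn {F : Type*} [NormedAddCommGroup F] [NormedSpace ℝ F]
    {k : ℝ → ℝ} {f : ℝ → F} {a x : ℝ}
    (hk : IntegrableOn k (Ioc a x)) (hf : ContinuousOn f (Icc a x)) :
    IntegrableOn (fun τ => k τ • f τ) (Ioc a x) := by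
  have := Integrable.smul_of_top_left hk (contOn_memTop hf)
  exact this

/-- Grönwall lemma in integral form with `L¹` coefficient. -/
lemma gronwall_L1 {a b : ℝ} {k g : ℝ → ℝ}
    (hk : IntegrableOn k (Ioc a b)) (hk0 : ∀ τ, 0 ≤ k τ)
    (hgc : ContinuousOn g (Icc a b)) (hg0 : ∀ τ ∈ Icc a b, 0 ≤ g τ)
    {c : ℝ} (hc : 0 ≤ c)
    (h : ∀ x ∈ Icc a b, g x ≤ c + ∫ τ in Ioc a x, k τ * g τ) :
    ∀ x ∈ Icc a b, g x ≤ c * Real.exp (∫ τ in Ioc a b, k τ) := by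
  have hkg : IntegrableOn (fun τ => k τ * g τ) (Ioc a b) := intOn_mul_of_contOn hk hgc
  set K : ℝ → ℝ := fun x => ∫ τ in Ioc a x, k τ with hK
  set u : ℝ → ℝ := fun x => c + ∫ τ in Ioc a x, k τ * g τ with hu
  have hK0 : ∀ x, 0 ≤ K x := fun x =>
    setIntegral_nonneg measurableSet_Ioc fun τ _ => hk0 τ
  have hKsplit : ∀ x y, a ≤ x → x ≤ y → y ≤ b → K y = K x + ∫ τ in Ioc x y, k τ :=
    fun x y h1 h2 h3 => split_Ioc_integral' h1 h2 h3 hk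
  have husplit : ∀ x y, a ≤ x → x ≤ y → y ≤ b →
      u y = u x + ∫ τ in Ioc x y, k τ * g τ := by
    intro x y h1 h2 h3
    simp only [hu]
    rw [split_Ioc_integral' h1 h2 h3 hkg]; ring
  have hKmono : ∀ x y, a ≤ x → x ≤ y → y ≤ b → K x ≤ K y := by
    intro x y h1 h2 h3
    rw [hKsplit x y h1 h2 h3]
    have : 0 ≤ ∫ τ in Ioc x y, k τ := setIntegral_nonneg measurableSet_Ioc fun τ _ => hk0 τ
    linarith
  have humono : ∀ x y, a ≤ x → x ≤ y → y ≤ b → u x ≤ u y := by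
    intro x y h1 h2 h3
    rw [husplit x y h1 h2 h3]
    have : 0 ≤ ∫ τ in Ioc x y, k τ * g τ := by
      apply setIntegral_nonneg measurableSet_Ioc
      intro τ hτ
      exact mul_nonneg (hk0 τ) (hg0 τ ⟨h1.trans hτ.1.le, hτ.2.trans h3⟩)
    linarith
  have hua : u a = c := by simp [hu]
  have hu0 : ∀ x ∈ Icc a b, 0 ≤ u x := fun x hx =>
    hc.trans (hua ▸ humono a x le_rfl hx.1 hx.2)
  have hKcont : ContinuousOn K (Icc a b) :=
    intervalIntegral.continuousOn_primitive ((integrableOn_Icc_iff_integrableOn_Ioc (f := k) (a := a) (b := b)).2 hk)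
  have hKa : K a = 0 := by simp [hK]
  have key : ∀ (δ : ℝ), 0 ≤ δ → δ < 1 → ∀ (i : ℕ), ∀ x ∈ Icc a b,
      K x ≤ i * δ → u x ≤ c / (1 - δ) ^ i := by
    intro δ hδ0 hδ1 i
    have h1δ : (0:ℝ) < 1 - δ := by linarith
    induction i with
    | zero =>
      intro x hx hKx
      have hKx0 : K x = 0 := le_antisymm (by simpa using hKx) (hK0 x)
      have hke : (fun τ => k τ) =ᵐ[volume.restrict (Ioc a x)] 0 :=
        (integral_eq_zero_iff_of_nonneg_ae (Filter.Eventually.of_forall hk0)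
          (hk.mono_set (Ioc_subset_Ioc le_rfl hx.2))).1 hKx0
      have hint : ∫ τ in Ioc a x, k τ * g τ = 0 := by
        have hke2 : (fun τ => k τ * g τ) =ᵐ[volume.restrict (Ioc a x)] 0 :=
          hke.mono fun τ hτ => by
            simp only [Pi.zero_apply] at hτ ⊢; rw [hτ, zero_mul]
        rw [integral_congr_ae hke2]
        simp
      simp only [hu, hint, add_zero, pow_zero, div_one]
      exact le_rfl
    | succ i ih =>
      intro x hx hKx
      by_cases hcase : K x ≤ i * δ
      · refine (ih x hx hcase).trans ?_
        rw [div_le_div_iff₀ (by positivity) (by positivity)]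
        have hpow : (1 - δ) ^ (i+1) ≤ (1 - δ) ^ i :=
          pow_le_pow_of_le_one h1δ.le (by linarith) (Nat.le_succ i)
        nlinarith [pow_pos h1δ i, pow_pos h1δ (i+1)]
      · push_neg at hcase
        have hKca : ContinuousOn K (Icc a x) := hKcont.mono (Icc_subset_Icc le_rfl hx.2)
        have hmem : (i:ℝ) * δ ∈ Icc (K a) (K x) := by
          constructor
          · rw [hKa]; positivity
          · exact hcase.le
        obtain ⟨y, hy, hKy⟩ := intermediate_value_Icc hx.1 hKca hmem
        have hyIcc : y ∈ Icc a b := ⟨hy.1, hy.2.trans hx.2⟩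
        have hsplit : u x = u y + ∫ τ in Ioc y x, k τ * g τ :=
          husplit y x hy.1 hy.2 hx.2
        have hbound : ∫ τ in Ioc y x, k τ * g τ ≤ (K x - K y) * u x := by
          have h1 : ∫ τ in Ioc y x, k τ * g τ ≤ ∫ τ in Ioc y x, k τ * u x := by
            apply setIntegral_mono_on
              (hkg.mono_set (Ioc_subset_Ioc hy.1 hx.2))
              ((hk.mono_set (Ioc_subset_Ioc hy.1 hx.2)).mul_const _)
              measurableSet_Ioc
            intro τ hτ
            have hτI : τ ∈ Icc a b := ⟨hy.1.trans hτ.1.le, hτ.2.trans hx.2⟩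
            have h5 : u τ ≤ u x := humono τ x hτI.1 hτ.2 hx.2
            have h4 : g τ ≤ u τ := h τ hτI
            have hgτ : g τ ≤ u x := by linarith
            exact mul_le_mul_of_nonneg_left hgτ (hk0 τ)
          rw [integral_mul_const] at h1
          have h2 : ∫ τ in Ioc y x, k τ = K x - K y := by
            have := hKsplit y x hy.1 hy.2 hx.2
            linarith
          rw [h2] at h1
          exact h1
        have hKd : K x - K y ≤ δ := by
          rw [hKy]
          push_cast at hKx ⊢
          linarith
        have hux0 : 0 ≤ u x := hu0 x hx
        have hstep : u x ≤ u y + δ * u x := by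
          have : (K x - K y) * u x ≤ δ * u x := mul_le_mul_of_nonneg_right hKd hux0
          linarith [hsplit, hbound]
        have huy : u y ≤ c / (1 - δ) ^ i := ih y hyIcc (by rw [hKy])
        have h6 : u x - δ * u x ≤ u y := by linarith
        have : (1 - δ) * u x ≤ c / (1 - δ) ^ i := by
          calc (1 - δ) * u x = u x - δ * u x := by ring
            _ ≤ u y := h6
            _ ≤ c / (1 - δ) ^ i := huy
        rw [pow_succ]
        rw [← div_div]
        rw [le_div_iff₀ h1δ]
        linarith
  intro x hx
  have hbound : ∀ N : ℕ, K b < N → u x ≤ c * Real.exp (K b / (1 - K b / N)) := by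
    intro N hN
    have hN0 : (0:ℝ) < N := lt_of_le_of_lt (hK0 b) hN
    set δ : ℝ := K b / N with hδ
    have hδ0 : 0 ≤ δ := div_nonneg (hK0 b) hN0.le
    have hδ1 : δ < 1 := (div_lt_one hN0).2 hN
    have h1δ : (0:ℝ) < 1 - δ := by linarith
    have hKx : K x ≤ (N:ℝ) * δ := by
      rw [hδ, mul_div_cancel₀ _ hN0.ne']
      exact hKmono x b hx.1 hx.2 le_rfl
    have h1 := key δ hδ0 hδ1 N x hx hKx
    have hstep : (1 - δ)⁻¹ ≤ Real.exp (δ / (1 - δ)) := by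
      have h2 := Real.add_one_le_exp (δ / (1 - δ))
      have h3 : δ / (1 - δ) + 1 = (1 - δ)⁻¹ := by field_simp; ring
      linarith
    have h4 : c / (1 - δ) ^ N ≤ c * Real.exp (δ / (1 - δ)) ^ N := by
      rw [div_eq_mul_inv, ← inv_pow]
      exact mul_le_mul_of_nonneg_left
        (pow_le_pow_left₀ (inv_nonneg.2 h1δ.le) hstep N) hc
    rw [← Real.exp_nat_mul] at h4
    have h5 : (N:ℝ) * (δ / (1 - δ)) = K b / (1 - K b / N) := by
      rw [hδ]; field_simp
    rw [h5] at h4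
    exact h1.trans h4
  have htend : Tendsto (fun N : ℕ => c * Real.exp (K b / (1 - K b / N))) atTop
      (𝓝 (c * Real.exp (K b))) := by
    have h1 : Tendsto (fun N : ℕ => K b / (N:ℝ)) atTop (𝓝 0) :=
      tendsto_const_div_atTop_nhds_zero_nat _
    have h2 : Tendsto (fun N : ℕ => K b / (1 - K b / N)) atTop (𝓝 (K b)) := by
      have h3 : Tendsto (fun N : ℕ => 1 - K b / (N:ℝ)) atTop (𝓝 1) := by
        simpa using tendsto_const_nhds.sub h1
      have h4 := (tendsto_const_nhds (x := K b)).div h3 one_ne_zero; rw [div_one] at h4; exact h4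
    exact ((Real.continuous_exp.tendsto _).comp h2).const_mul c
  have hfin : u x ≤ c * Real.exp (K b) := by
    refine ge_of_tendsto htend ?_
    filter_upwards [eventually_gt_atTop (⌈K b⌉₊)] with N hN
    exact hbound N (lt_of_le_of_lt (Nat.le_ceil _) (by exact_mod_cast hN))
  exact (h x hx).trans hfin

noncomputable section

abbrev E2 : Type := EuclideanSpace ℝ (Fin 2)
abbrev F2 : Type := WithLp 2 (E2 × E2)

noncomputable def LE2 : (E2 × E2) ≃L[ℝ] F2 :=
  (WithLp.prodContinuousLinearEquiv 2 ℝ E2 E2).symm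

lemma pairNorm (u v : E2) : ‖LE2 (u, v)‖ = Real.sqrt (‖u‖ ^ 2 + ‖v‖ ^ 2) := by
  rw [WithLp.prod_norm_eq_of_nat 2 (by norm_num) _]
  rw [Real.sqrt_eq_rpow]
  norm_num
  rfl

lemma smulPair (c : ℝ) (u v : E2) : LE2 (c • u, -(c • v)) = c • LE2 (u, -v) := by
  rw [← _root_.map_smul]
  congr 1
  rw [Prod.smul_mk, smul_neg]

lemma normSmulPair (c : ℝ) (u v : E2) : ‖c • LE2 (v, -u)‖ = |c| * ‖LE2 (u, v)‖ := by
  rw [norm_smul, Real.norm_eq_abs, pairNorm, pairNorm, norm_neg]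
  congr 2
  ring

lemma fstNormLe (u v : E2) : ‖u‖ ≤ ‖LE2 (u, v)‖ := by
  rw [pairNorm]
  have h1 : ‖u‖ ^ 2 ≤ ‖u‖ ^ 2 + ‖v‖ ^ 2 := by nlinarith [sq_nonneg ‖v‖]
  have := Real.sqrt_le_sqrt h1
  rwa [Real.sqrt_sq (norm_nonneg u)] at this

lemma pairContOn {t' n' : ℝ → E2} {s : Set ℝ}
    (ht : ContinuousOn t' s) (hn : ContinuousOn n' s) :
    ContinuousOn (fun τ => LE2 (t' τ, n' τ)) s :=
  LE2.continuous.comp_continuousOn (ht.prodMk hn)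

/-- Integral representation of the paired Frenet solution. -/
lemma frenet_pair_eq {a x : ℝ} (hax : a ≤ x) (κ' : ℝ → ℝ) (t' n' : ℝ → E2)
    (hκ' : IntegrableOn κ' (Ioc a x))
    (htc : ContinuousOn t' (Icc a x)) (hnc : ContinuousOn n' (Icc a x))
    (ht' : t' x = t' a + ∫ τ in a..x, κ' τ • n' τ)
    (hn' : n' x = n' a - ∫ τ in a..x, κ' τ • t' τ) :
    LE2 (t' x, n' x) = LE2 (t' a, n' a)
      + ∫ τ in Ioc a x, κ' τ • LE2 (n' τ, -(t' τ)) := by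
  have hin : IntegrableOn (fun τ => κ' τ • n' τ) (Ioc a x) := smul_intOn hκ' hnc
  have hit : IntegrableOn (fun τ => κ' τ • t' τ) (Ioc a x) := smul_intOn hκ' htc
  have hpair : ∫ τ in Ioc a x, (κ' τ • n' τ, -(κ' τ • t' τ)) =
      ((∫ τ in Ioc a x, κ' τ • n' τ, ∫ τ in Ioc a x, -(κ' τ • t' τ)) : E2 × E2) :=
    integral_pair hin hit.neg
  have hcomm : ∫ τ in Ioc a x, LE2 (κ' τ • n' τ, -(κ' τ • t' τ)) =
      LE2 (∫ τ in Ioc a x, (κ' τ • n' τ, -(κ' τ • t' τ))) :=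
    ContinuousLinearMap.integral_comp_comm (LE2 : (E2 × E2) →L[ℝ] F2)
      (hin.prodMk hit.neg)
  calc LE2 (t' x, n' x)
      = LE2 ((t' a, n' a) +
          ((∫ τ in Ioc a x, κ' τ • n' τ, ∫ τ in Ioc a x, -(κ' τ • t' τ)) : E2 × E2)) := by
        have h2 : n' a + ∫ τ in Ioc a x, -(κ' τ • t' τ)
            = n' a - ∫ τ in Ioc a x, κ' τ • t' τ := by
          rw [integral_neg]; abel
        rw [ht', hn', intervalIntegral.integral_of_le hax,
          intervalIntegral.integral_of_le hax, Prod.mk_add_mk, h2]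
    _ = LE2 (t' a, n' a) + LE2 ((∫ τ in Ioc a x, κ' τ • n' τ,
          ∫ τ in Ioc a x, -(κ' τ • t' τ)) : E2 × E2) := by
        rw [map_add]
    _ = LE2 (t' a, n' a) + ∫ τ in Ioc a x, LE2 (κ' τ • n' τ, -(κ' τ • t' τ)) := by
        rw [hcomm, hpair]
    _ = LE2 (t' a, n' a) + ∫ τ in Ioc a x, κ' τ • LE2 (n' τ, -(t' τ)) := by
        congr 1
        apply integral_congr_ae
        filter_upwards with τ
        rw [smulPair]

/-- A priori bound on the paired Frenet solution. -/
lemma frenet_norm_bound {a s : ℝ} (has : a ≤ s) (κ' : ℝ → ℝ) (t' n' : ℝ → E2)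
    (hκ' : IntegrableOn κ' (Ioc a s))
    (htc : ContinuousOn t' (Icc a s)) (hnc : ContinuousOn n' (Icc a s))
    (heq : ∀ x ∈ Icc a s, t' x = t' a + ∫ τ in a..x, κ' τ • n' τ)
    (hneq : ∀ x ∈ Icc a s, n' x = n' a - ∫ τ in a..x, κ' τ • t' τ) :
    ∀ x ∈ Icc a s, ‖LE2 (t' x, n' x)‖ ≤
      ‖LE2 (t' a, n' a)‖ * Real.exp (∫ τ in Ioc a s, |κ' τ|) := by
  apply gronwall_L1 (k := fun τ => |κ' τ|) (g := fun x => ‖LE2 (t' x, n' x)‖)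
    hκ'.abs (fun τ => abs_nonneg _)
    ((pairContOn htc hnc).norm) (fun τ _ => norm_nonneg _) (norm_nonneg _)
  intro x hx
  have hpe := frenet_pair_eq hx.1 κ' t' n'
    (hκ'.mono_set (Ioc_subset_Ioc le_rfl hx.2))
    (htc.mono (Icc_subset_Icc le_rfl hx.2)) (hnc.mono (Icc_subset_Icc le_rfl hx.2))
    (heq x hx) (hneq x hx)
  rw [hpe]
  refine (norm_add_le _ _).trans ?_
  gcongr
  refine (norm_integral_le_integral_norm _).trans ?_
  apply le_of_eq
  apply integral_congr_ae
  filter_upwards with τ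
  rw [normSmulPair]

/-- Perturbation estimate for two Frenet systems with equal initial data. -/
lemma frenet_diff_est {a s : ℝ} (has : a ≤ s) (κ1 κ2 : ℝ → ℝ) (t1 n1 t2 n2 : ℝ → E2)
    (hκ1 : IntegrableOn κ1 (Ioc a s)) (hκ2 : IntegrableOn κ2 (Ioc a s))
    (ht1c : ContinuousOn t1 (Icc a s)) (hn1c : ContinuousOn n1 (Icc a s))
    (ht2c : ContinuousOn t2 (Icc a s)) (hn2c : ContinuousOn n2 (Icc a s))
    (heq1 : ∀ x ∈ Icc a s, t1 x = t1 a + ∫ τ in a..x, κ1 τ • n1 τ)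
    (hneq1 : ∀ x ∈ Icc a s, n1 x = n1 a - ∫ τ in a..x, κ1 τ • t1 τ)
    (heq2 : ∀ x ∈ Icc a s, t2 x = t2 a + ∫ τ in a..x, κ2 τ • n2 τ)
    (hneq2 : ∀ x ∈ Icc a s, n2 x = n2 a - ∫ τ in a..x, κ2 τ • t2 τ)
    (hinit_t : t1 a = t2 a) (hinit_n : n1 a = n2 a)
    {Mz : ℝ} (hMz0 : 0 ≤ Mz)
    (hMz : ∀ τ ∈ Icc a s, ‖LE2 (t2 τ, n2 τ)‖ ≤ Mz) :
    ∀ x ∈ Icc a s, ‖LE2 (t1 x - t2 x, n1 x - n2 x)‖ ≤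
      (Mz * ∫ τ in Ioc a s, |κ1 τ - κ2 τ|) * Real.exp (∫ τ in Ioc a s, |κ1 τ|) := by
  have hId0 : 0 ≤ ∫ τ in Ioc a s, |κ1 τ - κ2 τ| :=
    setIntegral_nonneg measurableSet_Ioc fun τ _ => abs_nonneg _
  have hκd : IntegrableOn (fun τ => κ1 τ - κ2 τ) (Ioc a s) := hκ1.sub hκ2
  apply gronwall_L1 (k := fun τ => |κ1 τ|)
    (g := fun x => ‖LE2 (t1 x - t2 x, n1 x - n2 x)‖)
    hκ1.abs (fun τ => abs_nonneg _)
    ((pairContOn (ht1c.sub ht2c) (hn1c.sub hn2c)).norm)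
    (fun τ _ => norm_nonneg _) (mul_nonneg hMz0 hId0)
  intro x hx
  have hsub2 : Icc a x ⊆ Icc a s := Icc_subset_Icc le_rfl hx.2
  have hsub3 : Ioc a x ⊆ Ioc a s := Ioc_subset_Ioc le_rfl hx.2
  have hpe1 := frenet_pair_eq hx.1 κ1 t1 n1 (hκ1.mono_set hsub3)
    (ht1c.mono hsub2) (hn1c.mono hsub2) (heq1 x hx) (hneq1 x hx)
  have hpe2 := frenet_pair_eq hx.1 κ2 t2 n2 (hκ2.mono_set hsub3)
    (ht2c.mono hsub2) (hn2c.mono hsub2) (heq2 x hx) (hneq2 x hx)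
  have hint1 : IntegrableOn (fun τ => κ1 τ • LE2 (n1 τ, -(t1 τ))) (Ioc a x) := by
    apply smul_intOn (hκ1.mono_set hsub3)
    exact pairContOn (hn1c.mono hsub2) ((ht1c.mono hsub2).neg)
  have hint2 : IntegrableOn (fun τ => κ2 τ • LE2 (n2 τ, -(t2 τ))) (Ioc a x) := by
    apply smul_intOn (hκ2.mono_set hsub3)
    exact pairContOn (hn2c.mono hsub2) ((ht2c.mono hsub2).neg)
  have hdiff : LE2 (t1 x - t2 x, n1 x - n2 x) =
      ∫ τ in Ioc a x, (κ1 τ • LE2 (n1 τ, -(t1 τ)) - κ2 τ • LE2 (n2 τ, -(t2 τ))) := by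
    have hz : LE2 (t1 x - t2 x, n1 x - n2 x) = LE2 (t1 x, n1 x) - LE2 (t2 x, n2 x) := by
      rw [← map_sub]; rfl
    rw [hz, hpe1, hpe2, hinit_t, hinit_n, integral_sub hint1 hint2]
    abel
  rw [hdiff]
  refine (norm_integral_le_integral_norm _).trans ?_
  have hptw : ∀ τ, ‖κ1 τ • LE2 (n1 τ, -(t1 τ)) - κ2 τ • LE2 (n2 τ, -(t2 τ))‖ ≤
      |κ1 τ| * ‖LE2 (t1 τ - t2 τ, n1 τ - n2 τ)‖ + |κ1 τ - κ2 τ| * ‖LE2 (t2 τ, n2 τ)‖ := by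
    intro τ
    have hw : κ1 τ • LE2 (n1 τ, -(t1 τ)) - κ2 τ • LE2 (n2 τ, -(t2 τ)) =
        κ1 τ • LE2 (n1 τ - n2 τ, -(t1 τ - t2 τ))
          + (κ1 τ - κ2 τ) • LE2 (n2 τ, -(t2 τ)) := by
      have h1 : LE2 (n1 τ - n2 τ, -(t1 τ - t2 τ)) =
          LE2 (n1 τ, -(t1 τ)) - LE2 (n2 τ, -(t2 τ)) := by
        rw [← map_sub]
        congr 1
        rw [Prod.mk_sub_mk]
        congr 1
        abel
      rw [h1, smul_sub, sub_smul]
      abel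
    rw [hw]
    refine (norm_add_le _ _).trans ?_
    rw [normSmulPair, normSmulPair]
  have hIL : IntegrableOn
      (fun τ => ‖κ1 τ • LE2 (n1 τ, -(t1 τ)) - κ2 τ • LE2 (n2 τ, -(t2 τ))‖) (Ioc a x) :=
    (hint1.sub hint2).norm
  have hIR1 : IntegrableOn
      (fun τ => |κ1 τ| * ‖LE2 (t1 τ - t2 τ, n1 τ - n2 τ)‖) (Ioc a x) := by
    apply intOn_mul_of_contOn ((hκ1.mono_set hsub3).abs)
    exact ((pairContOn (ht1c.sub ht2c) (hn1c.sub hn2c)).norm).mono hsub2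
  have hIR2 : IntegrableOn
      (fun τ => |κ1 τ - κ2 τ| * ‖LE2 (t2 τ, n2 τ)‖) (Ioc a x) := by
    apply intOn_mul_of_contOn ((hκd.mono_set hsub3).abs)
    exact ((pairContOn ht2c hn2c).norm).mono hsub2
  calc ∫ τ in Ioc a x, ‖κ1 τ • LE2 (n1 τ, -(t1 τ)) - κ2 τ • LE2 (n2 τ, -(t2 τ))‖
      ≤ ∫ τ in Ioc a x, (|κ1 τ| * ‖LE2 (t1 τ - t2 τ, n1 τ - n2 τ)‖
          + |κ1 τ - κ2 τ| * ‖LE2 (t2 τ, n2 τ)‖) :=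
        integral_mono hIL (hIR1.add hIR2) (fun τ => hptw τ)
    _ = (∫ τ in Ioc a x, |κ1 τ - κ2 τ| * ‖LE2 (t2 τ, n2 τ)‖)
          + ∫ τ in Ioc a x, |κ1 τ| * ‖LE2 (t1 τ - t2 τ, n1 τ - n2 τ)‖ := by
        rw [integral_add hIR1 hIR2]; ring
    _ ≤ (Mz * ∫ τ in Ioc a s, |κ1 τ - κ2 τ|)
          + ∫ τ in Ioc a x, |κ1 τ| * ‖LE2 (t1 τ - t2 τ, n1 τ - n2 τ)‖ := by
        gcongr
        calc ∫ τ in Ioc a x, |κ1 τ - κ2 τ| * ‖LE2 (t2 τ, n2 τ)‖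
            ≤ ∫ τ in Ioc a x, |κ1 τ - κ2 τ| * Mz := by
              apply setIntegral_mono_on hIR2
                (((hκd.mono_set hsub3).abs).mul_const _) measurableSet_Ioc
              intro τ hτ
              exact mul_le_mul_of_nonneg_left
                (hMz τ ⟨hτ.1.le, hτ.2.trans hx.2⟩)
                (abs_nonneg _)
          _ = (∫ τ in Ioc a x, |κ1 τ - κ2 τ|) * Mz := integral_mul_const _ _
          _ ≤ (∫ τ in Ioc a s, |κ1 τ - κ2 τ|) * Mz := by
              apply mul_le_mul_of_nonneg_right _ hMz0
              apply setIntegral_mono_set (hκd.abs)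
                ((ae_restrict_iff' measurableSet_Ioc).2
                  (Filter.Eventually.of_forall fun τ _ => abs_nonneg _))
                hsub3.eventuallyLE
          _ = Mz * ∫ τ in Ioc a s, |κ1 τ - κ2 τ| := mul_comm _ _

end
/-- Pointwise convergence of the regularized arc-length parametrized curves
`X_ε` to the degenerate curve `X`:
`‖X_ε(s) - X(s)‖₂ ≤ M·M_ε·(b-a)·‖κ_ε - κ‖_{L¹(J)} → 0` as `ε → 0`, where
`X' = t` and `(t,n)` solves the Frenet–Serret system. -/
theorem curve_convergence (a b : ℝ) (hab : a < b) (κ : ℝ → ℝ)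
    (hκ : IntegrableOn κ (Set.Ioo a b))
    (κe : ℝ → ℝ → ℝ)
    (hκe_cont : ∀ ε > (0:ℝ), ContinuousOn (κe ε) (Set.Icc a b))
    (hκe_bdd : ∀ ε > (0:ℝ), ∃ C, ∀ s ∈ Set.Icc a b, |κe ε s| ≤ C)
    (hκe_L1 : Tendsto (fun ε => ∫ τ in Set.Ioo a b, |κe ε τ - κ τ|)
      (𝓝[>] (0:ℝ)) (𝓝 0))
    (X t n : ℝ → EuclideanSpace ℝ (Fin 2))
    (Xe te ne : ℝ → ℝ → EuclideanSpace ℝ (Fin 2))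
    (ht_cont : ContinuousOn t (Set.Icc a b)) (hn_cont : ContinuousOn n (Set.Icc a b))
    (hte_cont : ∀ ε > (0:ℝ), ContinuousOn (te ε) (Set.Icc a b))
    (hne_cont : ∀ ε > (0:ℝ), ContinuousOn (ne ε) (Set.Icc a b))
    (hX : ∀ s ∈ Set.Icc a b, X s = X a + ∫ τ in a..s, t τ)
    (ht : ∀ s ∈ Set.Icc a b, t s = t a + ∫ τ in a..s, κ τ • n τ)
    (hn : ∀ s ∈ Set.Icc a b, n s = n a - ∫ τ in a..s, κ τ • t τ)
    (hXe : ∀ ε > (0:ℝ), ∀ s ∈ Set.Icc a b, Xe ε s = Xe ε a + ∫ τ in a..s, te ε τ)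
    (hte : ∀ ε > (0:ℝ), ∀ s ∈ Set.Icc a b,
      te ε s = te ε a + ∫ τ in a..s, κe ε τ • ne ε τ)
    (hne : ∀ ε > (0:ℝ), ∀ s ∈ Set.Icc a b,
      ne ε s = ne ε a - ∫ τ in a..s, κe ε τ • te ε τ)
    (hinit_X : ∀ ε > (0:ℝ), Xe ε a = X a)
    (hinit_t : ∀ ε > (0:ℝ), te ε a = t a)
    (hinit_n : ∀ ε > (0:ℝ), ne ε a = n a) :
    ∀ s ∈ Set.Ioo a b,
      (∀ ε > (0:ℝ),
        ‖Xe ε s - X s‖ ≤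
          (Real.sqrt (‖t a‖ ^ 2 + ‖n a‖ ^ 2) *
              (1 + (∫ τ in Set.Ioo a b, |κ τ|) *
                Real.exp (∫ τ in Set.Ioo a b, |κ τ|))) *
            (1 + (∫ τ in Set.Ioo a b, |κe ε τ|) *
              Real.exp (∫ τ in Set.Ioo a b, |κe ε τ|)) *
            (b - a) * (∫ τ in Set.Ioo a b, |κe ε τ - κ τ|)) ∧
      Tendsto (fun ε => Xe ε s) (𝓝[>] (0:ℝ)) (𝓝 (X s)) := by
  intro s hs
  set Ka : ℝ := ∫ τ in Set.Ioo a b, |κ τ| with hKa_def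
  set P : ℝ := Real.sqrt (‖t a‖ ^ 2 + ‖n a‖ ^ 2) with hP_def
  have hP0 : 0 ≤ P := Real.sqrt_nonneg _
  have hKa0 : 0 ≤ Ka := setIntegral_nonneg measurableSet_Ioo fun τ _ => abs_nonneg _
  have hsub : Ioc a s ⊆ Ioo a b := fun τ hτ => ⟨hτ.1, lt_of_le_of_lt hτ.2 hs.2⟩
  have hIccsub : Icc a s ⊆ Icc a b := Icc_subset_Icc le_rfl hs.2.le
  have hκs : IntegrableOn κ (Ioc a s) := hκ.mono_set hsub
  have hzan : ‖LE2 (t a, n a)‖ = P := pairNorm _ _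
  -- the a priori bound on the degenerate solution
  have hA : ∀ x ∈ Icc a s, ‖LE2 (t x, n x)‖ ≤ P * Real.exp Ka := by
    intro x hx
    refine (frenet_norm_bound hs.1.le κ t n hκs (ht_cont.mono hIccsub)
      (hn_cont.mono hIccsub) (fun y hy => ht y (hIccsub hy))
      (fun y hy => hn y (hIccsub hy)) x hx).trans ?_
    rw [hzan]
    apply mul_le_mul_of_nonneg_left _ hP0
    apply Real.exp_le_exp.2
    apply setIntegral_mono_set hκ.abs
      ((ae_restrict_iff' measurableSet_Ioo).2
        (Filter.Eventually.of_forall fun τ _ => abs_nonneg _))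
      hsub.eventuallyLE
  have hexpaux : ∀ x : ℝ, 0 ≤ x → Real.exp x ≤ 1 + x * Real.exp x := by
    intro x hx
    have h1 : (1 - x) * Real.exp x ≤ 1 := by
      calc (1 - x) * Real.exp x = (-x + 1) * Real.exp x := by ring
        _ ≤ Real.exp (-x) * Real.exp x :=
            mul_le_mul_of_nonneg_right (Real.add_one_le_exp (-x)) (Real.exp_pos x).le
        _ = 1 := by rw [← Real.exp_add]; simp
    nlinarith [Real.exp_pos x]
  -- part 1 : the quantitative bound
  have part1 : ∀ ε > (0:ℝ),
      ‖Xe ε s - X s‖ ≤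
        (P * (1 + Ka * Real.exp Ka)) *
          (1 + (∫ τ in Set.Ioo a b, |κe ε τ|) *
            Real.exp (∫ τ in Set.Ioo a b, |κe ε τ|)) *
          (b - a) * (∫ τ in Set.Ioo a b, |κe ε τ - κ τ|) := by
    intro ε hε
    set Kε : ℝ := ∫ τ in Set.Ioo a b, |κe ε τ| with hKε_def
    set Iε : ℝ := ∫ τ in Set.Ioo a b, |κe ε τ - κ τ| with hIε_def
    have hκe_int : IntegrableOn (κe ε) (Ioo a b) :=
      ((hκe_cont ε hε).integrableOn_compact isCompact_Icc).mono_set Ioo_subset_Icc_self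
    have hκes : IntegrableOn (κe ε) (Ioc a s) := hκe_int.mono_set hsub
    have hκd : IntegrableOn (fun τ => κe ε τ - κ τ) (Ioo a b) := hκe_int.sub hκ
    have hKε0 : 0 ≤ Kε := setIntegral_nonneg measurableSet_Ioo fun τ _ => abs_nonneg _
    have hIε0 : 0 ≤ Iε := setIntegral_nonneg measurableSet_Ioo fun τ _ => abs_nonneg _
    -- perturbation estimate
    have hB : ∀ x ∈ Icc a s, ‖LE2 (te ε x - t x, ne ε x - n x)‖ ≤
        (P * Real.exp Ka) * Iε * Real.exp Kε := by
      intro x hx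
      have := frenet_diff_est hs.1.le (κe ε) κ (te ε) (ne ε) t n
        hκes hκs
        ((hte_cont ε hε).mono hIccsub) ((hne_cont ε hε).mono hIccsub)
        (ht_cont.mono hIccsub) (hn_cont.mono hIccsub)
        (fun y hy => hte ε hε y (hIccsub hy)) (fun y hy => hne ε hε y (hIccsub hy))
        (fun y hy => ht y (hIccsub hy)) (fun y hy => hn y (hIccsub hy))
        (hinit_t ε hε) (hinit_n ε hε)
        (mul_nonneg hP0 (Real.exp_pos Ka).le) hA x hx
      refine this.trans ?_
      have hmono1 : (∫ τ in Ioc a s, |κe ε τ - κ τ|) ≤ Iε := by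
        apply setIntegral_mono_set hκd.abs
          ((ae_restrict_iff' measurableSet_Ioo).2
            (Filter.Eventually.of_forall fun τ _ => abs_nonneg _))
          hsub.eventuallyLE
      have hmono2 : (∫ τ in Ioc a s, |κe ε τ|) ≤ Kε := by
        apply setIntegral_mono_set hκe_int.abs
          ((ae_restrict_iff' measurableSet_Ioo).2
            (Filter.Eventually.of_forall fun τ _ => abs_nonneg _))
          hsub.eventuallyLE
      have hIs0 : 0 ≤ ∫ τ in Ioc a s, |κe ε τ - κ τ| :=
        setIntegral_nonneg measurableSet_Ioc fun τ _ => abs_nonneg _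
      apply mul_le_mul
      · exact mul_le_mul_of_nonneg_left hmono1 (mul_nonneg hP0 (Real.exp_pos Ka).le)
      · exact Real.exp_le_exp.2 hmono2
      · exact (Real.exp_pos _).le
      · exact mul_nonneg (mul_nonneg hP0 (Real.exp_pos Ka).le) hIε0
    -- from the tangent estimate to the curve estimate
    have hte_int : IntegrableOn (te ε) (Ioc a s) :=
      (((hte_cont ε hε).mono hIccsub).integrableOn_compact isCompact_Icc).mono_set
        Ioc_subset_Icc_self
    have ht_int : IntegrableOn t (Ioc a s) :=
      ((ht_cont.mono hIccsub).integrableOn_compact isCompact_Icc).mono_set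
        Ioc_subset_Icc_self
    have hXdiff : Xe ε s - X s = ∫ τ in Ioc a s, (te ε τ - t τ) := by
      rw [hXe ε hε s (hIccsub (right_mem_Icc.2 hs.1.le)),
        hX s (hIccsub (right_mem_Icc.2 hs.1.le)), hinit_X ε hε,
        intervalIntegral.integral_of_le hs.1.le, intervalIntegral.integral_of_le hs.1.le,
        integral_sub hte_int ht_int]
      abel
    set C : ℝ := (P * Real.exp Ka) * Iε * Real.exp Kε with hC_def
    have hC0 : 0 ≤ C :=
      mul_nonneg (mul_nonneg (mul_nonneg hP0 (Real.exp_pos _).le) hIε0) (Real.exp_pos _).le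
    have hXbnd : ‖Xe ε s - X s‖ ≤ (s - a) * C := by
      rw [hXdiff]
      refine (norm_integral_le_integral_norm _).trans ?_
      have h1 : ∫ τ in Ioc a s, ‖te ε τ - t τ‖ ≤ ∫ τ in Ioc a s, C := by
        apply setIntegral_mono_on ((hte_int.sub ht_int).norm)
          (integrableOn_const measure_Ioc_lt_top.ne) measurableSet_Ioc
        intro τ hτ
        have hτI : τ ∈ Icc a s := ⟨hτ.1.le, hτ.2⟩
        exact (fstNormLe _ _).trans (hB τ hτI)
      refine h1.trans ?_
      rw [setIntegral_const, Real.volume_real_Ioc_of_le (by linarith [hs.1])]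
      simp [smul_eq_mul]
    refine hXbnd.trans ?_
    have hsb : s - a ≤ b - a := by linarith [hs.2]
    have h2 : (s - a) * C ≤ (b - a) * C := mul_le_mul_of_nonneg_right hsb hC0
    refine h2.trans ?_
    calc (b - a) * C = (P * Real.exp Ka * Real.exp Kε) * ((b - a) * Iε) := by
          rw [hC_def]; ring
      _ ≤ ((P * (1 + Ka * Real.exp Ka)) * (1 + Kε * Real.exp Kε)) * ((b - a) * Iε) := by
          apply mul_le_mul_of_nonneg_right _ (mul_nonneg (by linarith) hIε0)
          apply mul_le_mul
          · exact mul_le_mul_of_nonneg_left (hexpaux Ka hKa0) hP0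
          · exact hexpaux Kε hKε0
          · exact (Real.exp_pos _).le
          · apply mul_nonneg hP0
            nlinarith [Real.exp_pos Ka]
      _ = (P * (1 + Ka * Real.exp Ka)) * (1 + Kε * Real.exp Kε) * (b - a) * Iε := by
          ring
  refine ⟨part1, ?_⟩
  -- part 2 : convergence
  rw [tendsto_iff_norm_sub_tendsto_zero]
  have hKe_t : Tendsto (fun ε => ∫ τ in Set.Ioo a b, |κe ε τ|) (𝓝[>] (0:ℝ)) (𝓝 Ka) := by
    apply tendsto_of_tendsto_of_tendsto_of_le_of_le'
      (g := fun ε => Ka - ∫ τ in Set.Ioo a b, |κe ε τ - κ τ|)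
      (h := fun ε => Ka + ∫ τ in Set.Ioo a b, |κe ε τ - κ τ|)
    · simpa using tendsto_const_nhds.sub hκe_L1
    · simpa using tendsto_const_nhds.add hκe_L1
    all_goals {
      filter_upwards [self_mem_nhdsWithin] with ε hε
      have hε' : (0:ℝ) < ε := hε
      have hκe_int : IntegrableOn (κe ε) (Ioo a b) :=
        ((hκe_cont ε hε').integrableOn_compact isCompact_Icc).mono_set Ioo_subset_Icc_self
      have habs : |(∫ τ in Set.Ioo a b, |κe ε τ|) - Ka| ≤
          ∫ τ in Set.Ioo a b, |κe ε τ - κ τ| := by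
        rw [← integral_sub hκe_int.abs hκ.abs]
        refine (abs_le.2 ⟨neg_le_of_neg_le ?_, ?_⟩)
        · rw [← integral_neg]
          apply integral_mono ((hκe_int.abs.sub hκ.abs).neg) (hκe_int.sub hκ).abs
          intro τ
          simp only [Pi.neg_apply, Pi.sub_apply]
          have := abs_sub_abs_le_abs_sub (κ τ) (κe ε τ)
          rw [abs_sub_comm] at this
          linarith
        · apply integral_mono (hκe_int.abs.sub hκ.abs) (hκe_int.sub hκ).abs
          intro τ
          exact (abs_sub_abs_le_abs_sub _ _)
      rw [abs_le] at habs
      first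
        | linarith [habs.1]
        | linarith [habs.2]
    }
  have hRHS : Tendsto (fun ε => (P * (1 + Ka * Real.exp Ka)) *
      (1 + (∫ τ in Set.Ioo a b, |κe ε τ|) *
        Real.exp (∫ τ in Set.Ioo a b, |κe ε τ|)) *
      (b - a) * (∫ τ in Set.Ioo a b, |κe ε τ - κ τ|)) (𝓝[>] (0:ℝ)) (𝓝 0) := by
    have h1 : Tendsto (fun ε => 1 + (∫ τ in Set.Ioo a b, |κe ε τ|) *
        Real.exp (∫ τ in Set.Ioo a b, |κe ε τ|)) (𝓝[>] (0:ℝ))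
        (𝓝 (1 + Ka * Real.exp Ka)) :=
      tendsto_const_nhds.add (hKe_t.mul ((Real.continuous_exp.tendsto Ka).comp hKe_t))
    have h2 := ((h1.const_mul (P * (1 + Ka * Real.exp Ka))).mul_const (b - a)).mul hκe_L1
    simpa using h2
  apply squeeze_zero' ?_ ?_ hRHS
  · exact Filter.Eventually.of_forall fun ε => norm_nonneg _
  · filter_upwards [self_mem_nhdsWithin] with ε hε
    exact part1 ε hε
end

section
/- Let I=(a,b) be bounded, u ∈ L²(I) real, and define the quasi-derivative φ^{[1]} = φ' - uφ for φ ∈ H¹(I) with φ^{[1]} ∈ W^{1,1}(I). Then for φ, ψ in the maximal domain, the Lagrange identity holds: ⟨Lφ, ψ⟩_{L²} - ⟨φ, Lψ⟩_{L²} = [ψ̄^{[1]}φ - ψ̄φ^{[1]}]_a^b, where Lφ = -(φ^{[1]})' - uφ^{[1]} - u²φ. -/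
open MeasureTheory Set Filter Topology

/-- Adapted Lagrange identity for the Savchuk–Shkalikov quasi-derivative
`φ^{[1]} = φ' - uφ`: for `φ, ψ` in the maximal domain of
`Lφ = -(φ^{[1]})' - uφ^{[1]} - u²φ`,
`⟨Lφ, ψ⟩ - ⟨φ, Lψ⟩ = [ψ̄^{[1]}φ - ψ̄φ^{[1]}]_a^b`. -/
theorem adapted_lagrange_identity (a b : ℝ) (hab : a < b) (u : ℝ → ℝ)
    (hu : MemLp u 2 (volume.restrict (Set.Ioo a b)))
    (φ ψ φ1 ψ1 Dφ1 Dψ1 : ℝ → ℂ)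
    (hφ : ∀ x ∈ Set.Icc a b, HasDerivAt φ (φ1 x + (u x : ℂ) * φ x) x)
    (hψ : ∀ x ∈ Set.Icc a b, HasDerivAt ψ (ψ1 x + (u x : ℂ) * ψ x) x)
    (hφ1 : ∀ x ∈ Set.Icc a b, HasDerivAt φ1 (Dφ1 x) x)
    (hψ1 : ∀ x ∈ Set.Icc a b, HasDerivAt ψ1 (Dψ1 x) x)
    (Lφ Lψ : ℝ → ℂ)
    (hLφ : Lφ = fun x => -(Dφ1 x) - (u x : ℂ) * φ1 x - (u x : ℂ) ^ 2 * φ x)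
    (hLψ : Lψ = fun x => -(Dψ1 x) - (u x : ℂ) * ψ1 x - (u x : ℂ) ^ 2 * ψ x)
    (hint1 : IntervalIntegrable (fun x => Lφ x * (starRingEnd ℂ) (ψ x)) volume a b)
    (hint2 : IntervalIntegrable (fun x => φ x * (starRingEnd ℂ) (Lψ x)) volume a b) :
    (∫ x in a..b, Lφ x * (starRingEnd ℂ) (ψ x)) -
      (∫ x in a..b, φ x * (starRingEnd ℂ) (Lψ x)) =
    ((starRingEnd ℂ) (ψ1 b) * φ b - (starRingEnd ℂ) (ψ b) * φ1 b) -
      ((starRingEnd ℂ) (ψ1 a) * φ a - (starRingEnd ℂ) (ψ a) * φ1 a) := by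
  have hab' : a ≤ b := hab.le
  have key : ∀ x ∈ Set.uIcc a b,
      HasDerivAt (fun x => (starRingEnd ℂ) (ψ1 x) * φ x - (starRingEnd ℂ) (ψ x) * φ1 x)
        (Lφ x * (starRingEnd ℂ) (ψ x) - φ x * (starRingEnd ℂ) (Lψ x)) x := by
    intro x hx
    rw [Set.uIcc_of_le hab'] at hx
    have h1 := ((hψ1 x hx).star.fun_mul (hφ x hx)).fun_sub ((hψ x hx).star.fun_mul (hφ1 x hx))
    convert h1 using 1
    · rfl
    · rfl
    simp only [hLφ, hLψ, ← starRingEnd_apply, map_sub, map_neg, map_mul, map_add, map_pow,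
      Complex.conj_ofReal]
    ring
  have hcont : IntervalIntegrable
      (fun x => Lφ x * (starRingEnd ℂ) (ψ x) - φ x * (starRingEnd ℂ) (Lψ x)) volume a b :=
    hint1.sub hint2
  have := intervalIntegral.integral_eq_sub_of_hasDerivAt key hcont
  rw [intervalIntegral.integral_sub hint1 hint2] at this
  exact this
end
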